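/- Let X be a nonnegative integrable random variable on a probability space and let c > 0. Then (E[exp(−c·X/n)])^n converges to exp(−c·E[X]) as n → ∞. -/

import Mathlib

open MeasureTheory Filter Real

lemma aux_alg (t nn A : ℝ) (ht : t ≠ 0) (hn : nn ≠ 0) :
    t * (A / (t / nn)) = nn * A := by
  field_simp

noncomputable def gfun : ℝ → ℝ := fun x => if x = 0 then 1 else (Real.exp x - 1) / x

noncomputable def ffun : ℝ → ℝ := fun x => if x = 0 then 1 else Real.log (1 + x) / x

lemma gfun_cont : Filter.Tendsto gfun (nhds 0) (nhds 1) := by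
  rw [← nhdsNE_sup_pure (0 : ℝ), Filter.tendsto_sup]
  constructor
  · have h := hasDerivAt_iff_tendsto_slope.1 (Real.hasDerivAt_exp 0)
    rw [Real.exp_zero] at h
    refine h.congr' ?_
    filter_upwards [self_mem_nhdsWithin] with x hx
    simp only [Set.mem_compl_iff, Set.mem_singleton_iff] at hx
    simp [slope, gfun, hx, Real.exp_zero, div_eq_inv_mul]
  · simpa [gfun] using tendsto_pure_nhds gfun 0

lemma ffun_cont : Filter.Tendsto ffun (nhds 0) (nhds 1) := by
  rw [← nhdsNE_sup_pure (0 : ℝ), Filter.tendsto_sup]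
  constructor
  · have h := hasDerivAt_iff_tendsto_slope.1 (Real.hasDerivAt_log one_ne_zero)
    rw [inv_one] at h
    have hm : Filter.Tendsto (fun x : ℝ => 1 + x) (nhdsWithin 0 {(0:ℝ)}ᶜ)
        (nhdsWithin 1 {(1:ℝ)}ᶜ) := by
      apply Filter.Tendsto.inf
      · simpa using (Continuous.tendsto (by continuity : Continuous (fun x : ℝ => 1 + x)) 0)
      · apply Filter.tendsto_principal_principal.2
        intro x hx
        simp only [Set.mem_compl_iff, Set.mem_singleton_iff] at *
        intro hc; exact hx (by linarith)
    have := h.comp hm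
    refine this.congr' ?_
    filter_upwards [self_mem_nhdsWithin] with x hx
    simp only [Set.mem_compl_iff, Set.mem_singleton_iff] at hx
    simp [slope, ffun, hx, Real.log_one, Function.comp, div_eq_inv_mul]
  · simpa [ffun] using tendsto_pure_nhds ffun 0

lemma pow_tendsto_of_mul_sub (a : ℕ → ℝ) (L : ℝ)
    (h : Filter.Tendsto (fun n : ℕ => (n : ℝ) * (a n - 1)) Filter.atTop (nhds L)) :
    Filter.Tendsto (fun n : ℕ => a n ^ n) Filter.atTop (nhds (Real.exp L)) := by
  have ha1 : Filter.Tendsto (fun n : ℕ => a n - 1) Filter.atTop (nhds 0) := by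
    have hinv : Filter.Tendsto (fun n : ℕ => (n : ℝ)⁻¹) Filter.atTop (nhds 0) :=
      tendsto_inv_atTop_zero.comp tendsto_natCast_atTop_atTop
    have := h.mul hinv
    rw [mul_zero] at this
    refine this.congr' ?_
    filter_upwards [Filter.eventually_ge_atTop 1] with n hn
    have : (n : ℝ) ≠ 0 := Nat.cast_ne_zero.2 (by omega)
    field_simp
  have ha : Filter.Tendsto a Filter.atTop (nhds 1) := by
    have := ha1.add (tendsto_const_nhds (x := (1:ℝ)))
    simpa using this
  -- n * log (a n) → L
  have hlog : Filter.Tendsto (fun n : ℕ => (n : ℝ) * Real.log (a n)) Filter.atTop (nhds L) := by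
    have hf : Filter.Tendsto (fun n : ℕ => ffun (a n - 1)) Filter.atTop (nhds 1) :=
      ffun_cont.comp ha1
    have := h.mul hf
    rw [mul_one] at this
    refine this.congr ?_
    intro n
    by_cases hx : a n - 1 = 0
    · have : a n = 1 := by linarith
      simp [ffun, hx, this]
    · have : a n = 1 + (a n - 1) := by ring
      rw [this]
      simp [ffun, hx]
      field_simp
  have hexp := (Real.continuous_exp.tendsto L).comp hlog
  refine hexp.congr' ?_
  have hpos : ∀ᶠ n in Filter.atTop, 0 < a n :=
    ha.eventually (eventually_gt_nhds one_pos)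
  filter_upwards [hpos] with n hn
  rw [Function.comp_apply, Real.exp_nat_mul, Real.exp_log hn]

theorem tendsto_pow_integral_exp {Ω : Type*} [MeasurableSpace Ω]
    (μ : Measure Ω) [IsProbabilityMeasure μ] (X : Ω → ℝ)
    (hXmeas : Measurable X) (hXpos : ∀ᵐ ω ∂μ, 0 ≤ X ω)
    (hXint : Integrable X μ) (c : ℝ) (hc : 0 < c) :
    Filter.Tendsto
      (fun n : ℕ => (∫ ω, Real.exp (-c * X ω / n) ∂μ) ^ n)
      Filter.atTop (nhds (Real.exp (-c * ∫ ω, X ω ∂μ))) := by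
  have hint : ∫ ω, -c * X ω ∂μ = -c * ∫ ω, X ω ∂μ := integral_const_mul _ _
  rw [← hint]
  apply pow_tendsto_of_mul_sub
  -- DCT
  have hintexp : ∀ n : ℕ, Integrable (fun ω => Real.exp (-c * X ω / n)) μ := by
    intro n
    refine Integrable.mono' (integrable_const 1) ?_ ?_
    · exact (((hXmeas.const_mul (-c)).div_const _).exp).aestronglyMeasurable
    · filter_upwards [hXpos] with ω hω
      rw [Real.norm_eq_abs, abs_of_pos (Real.exp_pos _)]
      apply Real.exp_le_one_iff.2
      rcases Nat.eq_zero_or_pos n with h0 | h0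
      · simp [h0]
      · apply div_nonpos_of_nonpos_of_nonneg
        · exact mul_nonpos_of_nonpos_of_nonneg (by linarith) hω
        · positivity
  have key : Filter.Tendsto
      (fun n : ℕ => ∫ ω, (n : ℝ) * (Real.exp (-c * X ω / n) - 1) ∂μ)
      Filter.atTop (nhds (∫ ω, -c * X ω ∂μ)) := by
    apply tendsto_integral_of_dominated_convergence (fun ω => c * X ω)
    · intro n
      exact (((((hXmeas.const_mul (-c)).div_const _).exp).sub measurable_const).const_mul _).aestronglyMeasurable
    · exact hXint.const_mul c
    · intro n
      filter_upwards [hXpos] with ω hω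
      rcases Nat.eq_zero_or_pos n with h0 | h0
      · simp [h0]; positivity
      · have hn : (0:ℝ) < n := by exact_mod_cast h0
        set t := c * X ω / n with ht
        have htpos : 0 ≤ t := by positivity
        have harg : -c * X ω / n = -t := by rw [ht]; ring
        rw [harg, Real.norm_eq_abs]
        have h1 : Real.exp (-t) ≤ 1 := Real.exp_le_one_iff.2 (by linarith)
        have h2 : 1 - t ≤ Real.exp (-t) := by
          have := Real.add_one_le_exp (-t); linarith
        rw [abs_of_nonpos (by nlinarith)]
        have : -((n:ℝ) * (Real.exp (-t) - 1)) = (n:ℝ) * (1 - Real.exp (-t)) := by ring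
        rw [this]
        calc (n:ℝ) * (1 - Real.exp (-t)) ≤ (n:ℝ) * t := by
              apply mul_le_mul_of_nonneg_left (by linarith) (le_of_lt hn)
          _ = c * X ω := by rw [ht]; field_simp
    · filter_upwards [hXpos] with ω hω
      -- pointwise: n * (exp(-cXω/n) - 1) → -c X ω
      set t := -c * X ω with ht
      have hzero : Filter.Tendsto (fun n : ℕ => t / n) Filter.atTop (nhds 0) :=
        tendsto_const_nhds.div_atTop tendsto_natCast_atTop_atTop
      have hg : Filter.Tendsto (fun n : ℕ => gfun (t / n)) Filter.atTop (nhds 1) :=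
        gfun_cont.comp hzero
      have := (tendsto_const_nhds (x := t)).mul hg
      rw [mul_one] at this
      refine this.congr' ?_
      filter_upwards [Filter.eventually_ge_atTop 1] with n hn
      have hnne : (n : ℝ) ≠ 0 := Nat.cast_ne_zero.2 (by omega)
      by_cases hx : t / n = 0
      · have ht0 : t = 0 := by
          rcases div_eq_zero_iff.1 hx with h | h
          · exact h
          · exact absurd h hnne
        simp [gfun, hx, ht0]
      · have htne : t ≠ 0 := fun h0 => hx (by simp [h0])
        simp only [gfun, if_neg hx]
        exact aux_alg t n _ htne hnne
  refine key.congr ?_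
  intro n
  rw [integral_const_mul, integral_sub (hintexp n) (integrable_const 1), integral_const]
  simp
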